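/- Let X be a nonzero complex Banach space, 𝒩 a nest on X, n ≥ 2, and L : Alg 𝒩 → B(X) a Lie n-derivation. Then L(I) = λI for some λ ∈ ℂ. -/

import Mathlib

open scoped Classical

set_option synthInstance.maxHeartbeats 1000000
set_option maxHeartbeats 1000000

noncomputable section

/-- The `(n-1)`-th commutator polynomial `p_n(x_1, …, x_n)`, defined recursively by
`p_1(x_1) = x_1` and `p_k(x_1, …, x_k) = [p_{k-1}(x_1, …, x_{k-1}), x_k]`. -/
def commPoly {A : Type*} [NonUnitalNonAssocRing A] : (n : ℕ) → (Fin n → A) → A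
  | 0, _ => 0
  | 1, a => a 0
  | n + 2, a =>
      commPoly (n + 1) (fun i => a i.castSucc) * a (Fin.last (n + 1)) -
        a (Fin.last (n + 1)) * commPoly (n + 1) (fun i => a i.castSucc)

/-- A nest of closed subspaces of `X`: it contains `{0}` and `X`, is totally ordered by
inclusion, is closed under arbitrary intersections, and contains the norm-closed linear
span of the union of any subfamily. -/
structure IsNest {X : Type*} [NormedAddCommGroup X] [NormedSpace ℂ X]
    (𝒩 : Set (Submodule ℂ X)) : Prop where
  closed : ∀ N ∈ 𝒩, IsClosed (N : Set X)
  bot_mem : (⊥ : Submodule ℂ X) ∈ 𝒩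
  top_mem : (⊤ : Submodule ℂ X) ∈ 𝒩
  total : ∀ N₁ ∈ 𝒩, ∀ N₂ ∈ 𝒩, N₁ ≤ N₂ ∨ N₂ ≤ N₁
  sInf_mem : ∀ S ⊆ 𝒩, sInf S ∈ 𝒩
  closure_sSup_mem : ∀ S ⊆ 𝒩, (sSup S).topologicalClosure ∈ 𝒩

/-- The nest algebra `Alg 𝒩` of all bounded operators leaving every member of `𝒩`
invariant. -/
def nestAlgebra {X : Type*} [NormedAddCommGroup X] [NormedSpace ℂ X]
    (𝒩 : Set (Submodule ℂ X)) : Subalgebra ℂ (X →L[ℂ] X) where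
  carrier := {T : X →L[ℂ] X | ∀ N ∈ 𝒩, ∀ x ∈ N, T x ∈ N}
  mul_mem' := fun {a b} ha hb N hN x hx => ha N hN _ (hb N hN x hx)
  one_mem' := fun N _ x hx => hx
  add_mem' := fun {a b} ha hb N hN x hx => N.add_mem (ha N hN x hx) (hb N hN x hx)
  zero_mem' := fun N _ _ _ => N.zero_mem
  algebraMap_mem' := fun r N hN x hx => by
    simpa [Algebra.algebraMap_eq_smul_one] using N.smul_mem r hx

/-- `L` is a Lie `n`-derivation on the subalgebra `𝒜` of `B`:
`L(p_n(a_1,…,a_n)) = ∑_k p_n(a_1, …, a_{k-1}, L(a_k), a_{k+1}, …, a_n)`. -/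
def IsLieNDeriv {B : Type*} [Ring B] [Algebra ℂ B] (𝒜 : Subalgebra ℂ B)
    (n : ℕ) (L : ↥𝒜 →ₗ[ℂ] B) : Prop :=
  ∀ a : Fin n → ↥𝒜,
    L (commPoly n a) =
      ∑ k : Fin n, commPoly n (Function.update (fun i => ((a i : B))) k (L (a k)))

lemma commPoly_succ {A : Type*} [NonUnitalNonAssocRing A] (n : ℕ) (a : Fin (n+2) → A) :
    commPoly (n+2) a =
      commPoly (n+1) (fun i => a i.castSucc) * a (Fin.last (n+1)) -
        a (Fin.last (n+1)) * commPoly (n+1) (fun i => a i.castSucc) := rfl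

lemma commPoly_one {A : Type*} [NonUnitalNonAssocRing A] (a : Fin 1 → A) :
    commPoly 1 a = a 0 := rfl

lemma commPoly_first_one {A : Type*} [Ring A] :
    ∀ m : ℕ, ∀ a : Fin (m+2) → A, a 0 = 1 → commPoly (m+2) a = 0 := by
  intro m
  induction m with
  | zero =>
    intro a ha
    rw [commPoly_succ]
    have h1 : commPoly 1 (fun i : Fin 1 => a i.castSucc) = a 0 := by
      rw [commPoly_one, Fin.castSucc_zero]
    rw [h1, ha, one_mul, mul_one, sub_self]
  | succ m ih =>
    intro a ha
    rw [commPoly_succ]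
    have h1 : commPoly (m+2) (fun i : Fin (m+2) => a i.castSucc) = 0 := by
      apply ih
      rw [Fin.castSucc_zero]; exact ha
    rw [h1, zero_mul, mul_zero, sub_self]

lemma commPoly_map {A B : Type*} [Ring A] [Ring B] (φ : A →+* B) :
    ∀ n (a : Fin n → A), commPoly n (fun i => φ (a i)) = φ (commPoly n a)
  | 0, a => by simp [commPoly]
  | 1, a => rfl
  | (n+2), a => by
    rw [commPoly_succ, commPoly_succ, commPoly_map φ (n+1) (fun i => a i.castSucc),
      map_sub, map_mul, map_mul]


lemma hb2 {X : Type*} [NormedAddCommGroup X] [NormedSpace ℂ X]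
    (M : Submodule ℂ X) (hM : IsClosed (M : Set X)) {z : X} (hz : z ∉ M) :
    ∃ f : X →L[ℂ] ℂ, (∀ y ∈ M, f y = 0) ∧ f z = 1 := by
  obtain ⟨f, u, hfu, huz⟩ := RCLike.geometric_hahn_banach_closed_point
    (𝕜 := ℂ) (E := X) (s := (M : Set X)) ((M.restrictScalars ℝ).convex) hM hz
  have hf0 : ∀ y ∈ M, f y = 0 := by
    intro y hy
    by_contra h
    have habs : (0:ℝ) < Complex.normSq (f y) := by
      simpa [Complex.normSq_pos] using h
    have key : ∀ t : ℝ, t * Complex.normSq (f y) < u := by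
      intro t
      have hmem : ((t : ℂ) * (starRingEnd ℂ) (f y)) • y ∈ M := M.smul_mem _ hy
      have h2 := hfu _ hmem
      rw [map_smul, smul_eq_mul, mul_assoc, mul_comm ((starRingEnd ℂ) (f y)) (f y),
        Complex.mul_conj, RCLike.re_to_complex, Complex.re_ofReal_mul,
        Complex.ofReal_re] at h2
      exact h2
    obtain ⟨t, ht⟩ := exists_nat_gt (u / Complex.normSq (f y))
    have h3 := key t
    have h4 := (div_lt_iff₀ habs).1 ht
    linarith
  have h0 : (0:ℝ) < u := by
    have := hfu 0 M.zero_mem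
    simpa using this
  have hfz : f z ≠ 0 := by
    intro h
    rw [h] at huz
    simp at huz
    linarith
  refine ⟨(f z)⁻¹ • f, fun y hy => by simp [hf0 y hy], by simp [inv_mul_cancel₀ hfz]⟩


lemma wielandt {B : Type*} [NormedRing B] [NormedAlgebra ℂ B] [Nontrivial B]
    (a b : B) (lam : ℂ) (h : a * b - b * a = lam • (1 : B)) : lam = 0 := by
  by_contra hlam
  set a' : B := lam⁻¹ • a with ha'
  have h1 : a' * b - b * a' = 1 := by
    rw [ha', smul_mul_assoc, mul_smul_comm, ← smul_sub, h, smul_smul,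
      inv_mul_cancel₀ hlam, one_smul]
  have key : ∀ k : ℕ, a' * b ^ (k+1) - b ^ (k+1) * a' = (k+1 : ℕ) • b ^ k := by
    intro k
    induction k with
    | zero => simpa using h1
    | succ k ih =>
      have e : a' * b ^ (k+2) - b ^ (k+2) * a' =
          (a' * b ^ (k+1) - b ^ (k+1) * a') * b + b ^ (k+1) * (a' * b - b * a') := by
        rw [pow_succ]; noncomm_ring
      rw [e, ih, h1, mul_one, smul_mul_assoc, ← pow_succ]
      simp only [succ_nsmul]
  have bound : ∀ k : ℕ, b ^ k ≠ 0 → ((k:ℝ) + 1) ≤ 2 * ‖a'‖ * ‖b‖ := by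
    intro k hk
    have h2 : ‖(k+1 : ℕ) • b ^ k‖ = ((k:ℝ)+1) * ‖b ^ k‖ := by
      rw [← Nat.cast_smul_eq_nsmul ℝ, norm_smul, Real.norm_natCast]
      push_cast; ring
    have h3 : ‖(k+1 : ℕ) • b ^ k‖ ≤ 2 * ‖a'‖ * ‖b‖ * ‖b ^ k‖ := by
      rw [← key k]
      calc ‖a' * b ^ (k+1) - b ^ (k+1) * a'‖ ≤ ‖a' * b ^ (k+1)‖ + ‖b ^ (k+1) * a'‖ :=
            norm_sub_le _ _
        _ ≤ ‖a'‖ * ‖b ^ (k+1)‖ + ‖b ^ (k+1)‖ * ‖a'‖ := by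
            gcongr <;> [exact norm_mul_le _ _; exact norm_mul_le _ _]
        _ ≤ 2 * ‖a'‖ * ‖b‖ * ‖b ^ k‖ := by
            have hb : ‖b ^ (k+1)‖ ≤ ‖b‖ * ‖b ^ k‖ := by
              rw [pow_succ']; exact norm_mul_le _ _
            nlinarith [norm_nonneg a', norm_nonneg (b ^ k), norm_nonneg b,
              norm_nonneg (b^(k+1))]
    have hbk : (0:ℝ) < ‖b ^ k‖ := norm_pos_iff.mpr hk
    have h4 : ((k:ℝ)+1) * ‖b ^ k‖ ≤ 2 * ‖a'‖ * ‖b‖ * ‖b ^ k‖ := h2 ▸ h3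
    exact le_of_mul_le_mul_right h4 hbk
  have hex : ∃ k, b ^ k = 0 := by
    obtain ⟨k, hk⟩ := exists_nat_gt (2 * ‖a'‖ * ‖b‖)
    by_contra hc
    push_neg at hc
    have := bound k (hc k)
    linarith
  classical
  have hk0 : Nat.find hex ≠ 0 := by
    intro h0
    have := Nat.find_spec hex
    rw [h0, pow_zero] at this
    exact one_ne_zero this
  obtain ⟨j, hj⟩ := Nat.exists_eq_succ_of_ne_zero hk0
  have hbj1 : b ^ (j+1) = 0 := by
    have hs := Nat.find_spec hex
    rw [hj] at hs
    exact hs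
  have hkey := key j
  rw [hbj1, zero_mul, mul_zero, sub_zero] at hkey
  have hkey' : ((j+1 : ℕ) : ℂ) • b ^ j = 0 := by
    rw [Nat.cast_smul_eq_nsmul ℂ, ← hkey]
  have hbj : b ^ j = 0 := by
    rcases smul_eq_zero.mp hkey' with hc | hx
    · exact absurd hc (Nat.cast_ne_zero.mpr j.succ_ne_zero)
    · exact hx
  exact Nat.find_min hex (hj ▸ j.lt_succ_self) hbj

section Commutant
variable {X : Type*} [NormedAddCommGroup X] [NormedSpace ℂ X] [Nontrivial X]
variable {𝒩 : Set (Submodule ℂ X)}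

lemma mem_nestAlgebra_iff {A : X →L[ℂ] X} :
    A ∈ nestAlgebra 𝒩 ↔ ∀ N ∈ 𝒩, ∀ x ∈ N, A x ∈ N := Iff.rfl

lemma rankOne_mem (hnest : IsNest 𝒩) (x : X) (f : X →L[ℂ] ℂ)
    (h : ∀ M ∈ 𝒩, (∀ y ∈ M, f y = 0) ∨ x ∈ M) :
    f.smulRight x ∈ nestAlgebra 𝒩 := by
  intro M hM y hy
  rw [ContinuousLinearMap.smulRight_apply]
  rcases h M hM with hf | hx
  · rw [hf y hy, zero_smul]; exact M.zero_mem
  · exact M.smul_mem _ hx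

lemma commutant_trivial (hnest : IsNest 𝒩) (T : X →L[ℂ] X)
    (h : ∀ A ∈ nestAlgebra 𝒩, T * A = A * T) :
    ∃ lam : ℂ, T = lam • (1 : X →L[ℂ] X) := by
  have hcomm : ∀ A ∈ nestAlgebra 𝒩, ∀ y, T (A y) = A (T y) := by
    intro A hA y
    have := congrArg (fun (B : X →L[ℂ] X) => B y) (h A hA)
    simpa using this
  -- commutation relation with a rank-one operator
  have CC : ∀ (x : X) (f : X →L[ℂ] ℂ), f.smulRight x ∈ nestAlgebra 𝒩 →
      ∀ y, f y • T x = f (T y) • x := by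
    intro x f hmem y
    have := hcomm _ hmem y
    simpa [ContinuousLinearMap.smulRight_apply, map_smul] using this
  by_cases hNT : ∃ N ∈ 𝒩, N ≠ ⊥ ∧ N ≠ ⊤
  · obtain ⟨N, hN, hNbot, hNtop⟩ := hNT
    obtain ⟨x₀, hx₀N, hx₀ne⟩ := N.ne_bot_iff.mp hNbot
    have hz₁ : ∃ z, z ∉ N := by
      by_contra hc
      push_neg at hc
      exact hNtop (Submodule.eq_top_iff'.mpr hc)
    obtain ⟨z₁, hz₁⟩ := hz₁
    obtain ⟨f₀, hf₀N, hf₀z⟩ := hb2 N (hnest.closed N hN) hz₁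
    set lam := f₀ (T z₁) with hlam
    set S : X →L[ℂ] X := T - lam • 1 with hS
    have hSapp : ∀ y, S y = T y - lam • y := by intro y; simp [hS]
    have hScomm : ∀ (x : X) (f : X →L[ℂ] ℂ), f.smulRight x ∈ nestAlgebra 𝒩 →
        ∀ y, f y • S x = f (S y) • x := by
      intro x f hmem y
      have h1 := CC x f hmem y
      have h2 : f (S y) = f (T y) - lam * f y := by
        rw [hSapp]; simp [map_sub, map_smul, smul_eq_mul]
      rw [hSapp, h2, smul_sub, sub_smul, h1, smul_smul, mul_comm (f y) lam]
    -- membership of the standard rank ones: x ∈ M, f ⊥ M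
    have stdmem : ∀ (M : Submodule ℂ X), M ∈ 𝒩 → ∀ x ∈ M, ∀ f : X →L[ℂ] ℂ,
        (∀ y ∈ M, f y = 0) → f.smulRight x ∈ nestAlgebra 𝒩 := by
      intro M hM x hx f hf
      apply rankOne_mem hnest
      intro M' hM'
      rcases hnest.total M' hM' M hM with hle | hle
      · exact Or.inl (fun y hy => hf y (hle hy))
      · exact Or.inr (hle hx)
    have step1 : ∀ x ∈ N, S x = 0 := by
      intro x hx
      have hmem := stdmem N hN x hx f₀ hf₀N
      have := CC x f₀ hmem z₁
      rw [hf₀z, one_smul, ← hlam] at this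
      rw [hSapp, this, sub_self]
    have step2 : ∀ y, S y ∈ N := by
      intro y
      by_contra hy
      obtain ⟨f, hfN, hfy⟩ := hb2 N (hnest.closed N hN) hy
      have hmem := stdmem N hN x₀ hx₀N f hfN
      have := hScomm x₀ f hmem y
      rw [step1 x₀ hx₀N, smul_zero, hfy, one_smul] at this
      exact hx₀ne this.symm
    have step3 : ∀ M ∈ 𝒩, M ≠ ⊤ → ∀ x ∈ M, S x = 0 := by
      intro M hM hMtop x hx
      rcases hnest.total M hM N hN with hle | hle
      · exact step1 x (hle hx)
      · have hz₂ : ∃ z, z ∉ M := by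
          by_contra hc
          push_neg at hc
          exact hMtop (Submodule.eq_top_iff'.mpr hc)
        obtain ⟨z₂, hz₂⟩ := hz₂
        obtain ⟨f₁, hf₁M, hf₁z⟩ := hb2 M (hnest.closed M hM) hz₂
        have hmem := stdmem M hM x hx f₁ hf₁M
        have := hScomm x f₁ hmem z₂
        rw [hf₁z, one_smul, hf₁M _ (hle (step2 z₂)), zero_smul] at this
        exact this
    set 𝒮 : Set (Submodule ℂ X) := {M | M ∈ 𝒩 ∧ M ≠ ⊤} with h𝒮
    set K : Submodule ℂ X := (sSup 𝒮).topologicalClosure with hK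
    have hKmem : K ∈ 𝒩 := hnest.closure_sSup_mem 𝒮 (fun M hM => hM.1)
    have hKker : ∀ x ∈ K, S x = 0 := by
      have hle : sSup 𝒮 ≤ LinearMap.ker (S : X →ₗ[ℂ] X) := by
        apply sSup_le
        intro M hM
        intro x hx
        rw [LinearMap.mem_ker]
        exact step3 M hM.1 hM.2 x hx
      have := Submodule.topologicalClosure_minimal _ hle (ContinuousLinearMap.isClosed_ker S)
      intro x hx
      exact LinearMap.mem_ker.mp (this hx)
    by_cases hKtop : K = ⊤
    · refine ⟨lam, ?_⟩
      ext x
      have := hKker x (hKtop ▸ Submodule.mem_top)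
      rw [hSapp] at this
      have := sub_eq_zero.mp this
      simpa using this
    · have hz₃ : ∃ z, z ∉ K := by
        by_contra hc
        push_neg at hc
        exact hKtop (Submodule.eq_top_iff'.mpr hc)
      obtain ⟨z₃, hz₃⟩ := hz₃
      obtain ⟨f₂, hf₂K, hf₂z⟩ := hb2 K (hnest.closed K hKmem) hz₃
      have hNK : N ≤ K := le_trans (le_sSup (by exact ⟨hN, hNtop⟩))
        (Submodule.le_topologicalClosure _)
      have step6 : ∀ u, S u = 0 := by
        intro u
        have hmem : f₂.smulRight u ∈ nestAlgebra 𝒩 := by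
          apply rankOne_mem hnest
          intro M hM
          by_cases hMtop : M = ⊤
          · exact Or.inr (hMtop ▸ Submodule.mem_top)
          · refine Or.inl (fun y hy => hf₂K y ?_)
            have : M ≤ K := le_trans (le_sSup (by exact ⟨hM, hMtop⟩))
              (Submodule.le_topologicalClosure _)
            exact this hy
        have := hScomm u f₂ hmem z₃
        rw [hf₂z, one_smul, hf₂K _ (hNK (step2 z₃)), zero_smul] at this
        exact this
      refine ⟨lam, ?_⟩
      ext x
      have := step6 x
      rw [hSapp] at this
      have := sub_eq_zero.mp this
      simpa using this
  · -- trivial nest: every rank one belongs to the algebra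
    push_neg at hNT
    obtain ⟨x₀, hx₀⟩ := exists_ne (0 : X)
    obtain ⟨f₀, hf₀⟩ := SeparatingDual.exists_eq_one (R := ℂ) hx₀
    have hmem : ∀ x : X, f₀.smulRight x ∈ nestAlgebra 𝒩 := by
      intro x
      apply rankOne_mem hnest
      intro M hM
      by_cases hMb : M = ⊥
      · refine Or.inl (fun y hy => ?_)
        have : y = 0 := by simpa [hMb] using hy
        rw [this, map_zero]
      · exact Or.inr ((hNT M hM hMb) ▸ Submodule.mem_top)
    refine ⟨f₀ (T x₀), ?_⟩
    ext x
    have := CC x f₀ (hmem x) x₀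
    rw [hf₀, one_smul] at this
    simpa using this

end Commutant

/-- Let `X` be a nonzero complex Banach space, `𝒩` a nest on `X`,
`n ≥ 2`, and `L : Alg 𝒩 → B(X)` a Lie `n`-derivation.  Then `L(I) = λ I` for some
`λ ∈ ℂ`. -/
theorem statement4 {X : Type*} [NormedAddCommGroup X] [NormedSpace ℂ X]
    [CompleteSpace X] [Nontrivial X]
    (𝒩 : Set (Submodule ℂ X)) (hnest : IsNest 𝒩)
    (n : ℕ) (hn : 2 ≤ n)
    (L : ↥(nestAlgebra 𝒩) →ₗ[ℂ] (X →L[ℂ] X))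
    (hL : IsLieNDeriv (nestAlgebra 𝒩) n L) :
    ∃ lam : ℂ, L 1 = lam • (1 : X →L[ℂ] X) := by
  have hone : (1 : X →L[ℂ] X) ≠ 0 := by
    intro hc
    obtain ⟨x, hx⟩ := exists_ne (0 : X)
    have : (1 : X →L[ℂ] X) x = (0 : X →L[ℂ] X) x := by rw [hc]
    simp at this
    exact hx this
  haveI : Nontrivial (X →L[ℂ] X) := nontrivial_of_ne 1 0 hone
  match n, hn with
  | (m+2), _ => ?_
  clear hn
  set BB := X →L[ℂ] X with hBB
  set T : BB := L 1 with hT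
  -- Step 1 : the (m+1)-fold commutators of T with algebra elements vanish
  have key : ∀ A : Fin (m+1) → ↥(nestAlgebra 𝒩),
      commPoly (m+2) ((Fin.cons T (fun i => ((A i : BB)))) : Fin (m+2) → BB) = 0 := by
    intro A
    set e : Fin (m+2) → ↥(nestAlgebra 𝒩) := Fin.cons 1 A with he
    have h := hL e
    have hzero : commPoly (m+2) e = 0 :=
      commPoly_first_one m e (by rw [he, Fin.cons_zero])
    rw [hzero, map_zero] at h
    have hother : ∀ k : Fin (m+2), k ≠ 0 →
        commPoly (m+2) (Function.update (fun i => ((e i : BB))) k (L (e k))) = 0 := by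
      intro k hk
      apply commPoly_first_one
      rw [Function.update_of_ne (Ne.symm hk)]
      rw [he]
      simp
    rw [Fintype.sum_eq_single (0 : Fin (m+2)) hother] at h
    have hfun : Function.update (fun i => ((e i : BB))) 0 (L (e 0)) =
        ((Fin.cons T (fun i => ((A i : BB)))) : Fin (m+2) → BB) := by
      funext i
      refine Fin.cases ?_ ?_ i
      · rw [Function.update_self, Fin.cons_zero, hT, he, Fin.cons_zero]
      · intro j
        rw [Function.update_of_ne (Fin.succ_ne_zero j), Fin.cons_succ, he, Fin.cons_succ]
    rw [hfun] at h
    exact h.symm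
  -- Step 2 : one step of the downward induction
  have step : ∀ k : ℕ,
      (∀ A : Fin (k+2) → ↥(nestAlgebra 𝒩),
        commPoly (k+3) ((Fin.cons T (fun i => ((A i : BB)))) : Fin (k+3) → BB) = 0) →
      (∀ A : Fin (k+1) → ↥(nestAlgebra 𝒩),
        commPoly (k+2) ((Fin.cons T (fun i => ((A i : BB)))) : Fin (k+2) → BB) = 0) := by
    intro k hk A
    set c : Fin (k+2) → BB := Fin.cons T (fun i => ((A i : BB))) with hc
    set S' : BB := commPoly (k+2) c with hS'
    have hcommS : ∀ B ∈ nestAlgebra 𝒩, S' * B = B * S' := by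
      intro B hB
      set b : ↥(nestAlgebra 𝒩) := ⟨B, hB⟩ with hb
      set As : Fin (k+2) → ↥(nestAlgebra 𝒩) := Fin.snoc A b with hAs
      have h1 := hk As
      rw [commPoly_succ] at h1
      have claim1 : (fun i : Fin (k+2) =>
          ((Fin.cons T (fun i => ((As i : BB)))) : Fin (k+3) → BB) i.castSucc) = c := by
        funext i
        rw [hc]
        refine Fin.cases ?_ ?_ i
        · rw [Fin.castSucc_zero, Fin.cons_zero, Fin.cons_zero]
        · intro j
          rw [← Fin.succ_castSucc, Fin.cons_succ, Fin.cons_succ, hAs, Fin.snoc_castSucc]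
      have claim2 : ((Fin.cons T (fun i => ((As i : BB)))) : Fin (k+3) → BB)
          (Fin.last (k+2)) = B := by
        rw [← Fin.succ_last, Fin.cons_succ, hAs, Fin.snoc_last]
      rw [claim1, claim2, ← hS'] at h1
      exact sub_eq_zero.mp h1
    obtain ⟨lam, hlam⟩ := commutant_trivial hnest S' hcommS
    have hlam0 : lam = 0 := by
      have hexp : S' = commPoly (k+1) (fun i : Fin (k+1) => c i.castSucc) * c (Fin.last (k+1)) -
          c (Fin.last (k+1)) * commPoly (k+1) (fun i : Fin (k+1) => c i.castSucc) := by
        rw [hS', commPoly_succ]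
      exact wielandt _ _ lam (by rw [← hexp, hlam])
    rw [hlam0, zero_smul] at hlam
    exact hlam
  -- iterate the downward induction
  have down : ∀ j : ℕ,
      (∀ A : Fin (j+1) → ↥(nestAlgebra 𝒩),
        commPoly (j+2) ((Fin.cons T (fun i => ((A i : BB)))) : Fin (j+2) → BB) = 0) →
      (∀ A : Fin 1 → ↥(nestAlgebra 𝒩),
        commPoly 2 ((Fin.cons T (fun i => ((A i : BB)))) : Fin 2 → BB) = 0) := by
    intro j
    induction j with
    | zero => exact fun h => h
    | succ j ih => exact fun h => ih (step j h)
  have com1 := down m key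
  -- T commutes with the whole nest algebra
  have hfinal : ∀ B ∈ nestAlgebra 𝒩, T * B = B * T := by
    intro B hB
    have h1 := com1 (fun _ => ⟨B, hB⟩)
    rw [commPoly_succ] at h1
    set c : Fin 2 → BB := Fin.cons T (fun _ : Fin 1 => ((B : BB))) with hc
    have c1 : commPoly 1 (fun i : Fin 1 => c i.castSucc) = T := by
      rw [commPoly_one, Fin.castSucc_zero, hc, Fin.cons_zero]
    have c2 : c (Fin.last 1) = B := by
      rw [hc, ← Fin.succ_last, Fin.cons_succ]
    rw [c1, c2] at h1
    exact sub_eq_zero.mp h1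
  exact commutant_trivial hnest T hfinal
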